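/- Let S be a finite nonempty set, ε > 0, c ∈ [0, 1), and g, h : S → ℍ. Suppose there are x̃, ỹ ∈ S such that Im g_ỹ > ε · Im g_u for all u ∈ S and Q_{x̃,ỹ} · cos α_{x̃,ỹ} ≤ c. Then Σ_{y∈S} q_y(g) · Q_{x̃,y} · cos α_{x̃,y} ≤ 1 − (1 − c)·ε/|S|. -/

import Mathlib

/-- The hyperbolic semi-metric `γ(g,h) = |g-h|² / (Im g · Im h)` on the upper half plane. -/
noncomputable def gam (g h : ℂ) : ℝ := ‖g - h‖ ^ 2 / (g.im * h.im)

/-- `cos α_{x,y}` formed from the values `g_x, h_x, g_y, h_y`. -/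
noncomputable def cosAlpha (gx hx gy hy : ℂ) : ℝ :=
  if gx ≠ hx ∧ gy ≠ hy then
    ((gx - hx) * (starRingEnd ℂ) (gy - hy)).re /
      (‖gx - hx‖ * ‖gy - hy‖)
  else 0

/-- `Q_{x,y}` formed from the values `g_x, h_x, g_y, h_y`. -/
noncomputable def Qquot (gx hx gy hy : ℂ) : ℝ :=
  if gx ≠ hx ∧ gy ≠ hy then
    Real.sqrt (gx.im * gy.im * hx.im * hy.im * gam gx hx * gam gy hy) /
      ((1 / 2) * (gx.im * hy.im * gam gy hy + gy.im * hx.im * gam gx hx))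
  else 0

lemma Qcos_le_one (gx hx gy hy : ℂ) (h1 : 0 < gx.im) (h2 : 0 < hx.im)
    (h3 : 0 < gy.im) (h4 : 0 < hy.im) :
    Qquot gx hx gy hy * cosAlpha gx hx gy hy ≤ 1 := by
  unfold Qquot cosAlpha
  by_cases hcase : gx ≠ hx ∧ gy ≠ hy
  · rw [if_pos hcase, if_pos hcase]
    obtain ⟨hx1, hy1⟩ := hcase
    have hax : 0 < ‖gx - hx‖ := by
      simpa [sub_eq_zero] using hx1
    have hay : 0 < ‖gy - hy‖ := by
      simpa [sub_eq_zero] using hy1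
    have hγx : 0 < gam gx hx := by unfold gam; positivity
    have hγy : 0 < gam gy hy := by unfold gam; positivity
    set u := gx.im * hy.im * gam gy hy with hu
    set v := gy.im * hx.im * gam gx hx with hv
    have hupos : 0 < u := by positivity
    have hvpos : 0 < v := by positivity
    have hprod : gx.im * gy.im * hx.im * hy.im * gam gx hx * gam gy hy = u * v := by
      rw [hu, hv]; ring
    have hQ1 : Real.sqrt (gx.im * gy.im * hx.im * hy.im * gam gx hx * gam gy hy) /
        ((1 / 2) * (gx.im * hy.im * gam gy hy + gy.im * hx.im * gam gx hx)) ≤ 1 := by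
      rw [hprod]
      rw [div_le_one (by positivity)]
      have : Real.sqrt (u * v) ≤ Real.sqrt (((u + v) / 2) ^ 2) :=
        Real.sqrt_le_sqrt (by nlinarith [sq_nonneg (u - v)])
      rw [Real.sqrt_sq (by positivity)] at this
      rw [hu, hv] at this
      linarith
    have hQ0 : 0 ≤ Real.sqrt (gx.im * gy.im * hx.im * hy.im * gam gx hx * gam gy hy) /
        ((1 / 2) * (gx.im * hy.im * gam gy hy + gy.im * hx.im * gam gx hx)) := by
      positivity
    have hcos1 : ((gx - hx) * (starRingEnd ℂ) (gy - hy)).re /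
        (‖gx - hx‖ * ‖gy - hy‖) ≤ 1 := by
      rw [div_le_one (by positivity)]
      calc ((gx - hx) * (starRingEnd ℂ) (gy - hy)).re
          ≤ ‖(gx - hx) * (starRingEnd ℂ) (gy - hy)‖ := Complex.re_le_norm _
        _ = ‖gx - hx‖ * ‖gy - hy‖ := by
            rw [norm_mul, Complex.norm_conj]
    nlinarith
  · simp [hcase]

theorem visible_contraction_estimate
    {S : Type*} [Fintype S] [Nonempty S]
    (ε : ℝ) (hε : 0 < ε) (c : ℝ) (hc : c ∈ Set.Ico (0 : ℝ) 1)
    (g h : S → ℂ) (hg : ∀ x, 0 < (g x).im) (hh : ∀ x, 0 < (h x).im)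
    (x' y' : S)
    (hvis : ∀ u : S, ε * (g u).im < (g y').im)
    (hQcos : Qquot (g x') (h x') (g y') (h y') * cosAlpha (g x') (h x') (g y') (h y') ≤ c) :
    ∑ y, ((g y).im / ∑ u, (g u).im) * Qquot (g x') (h x') (g y) (h y) *
        cosAlpha (g x') (h x') (g y) (h y) ≤
      1 - (1 - c) * ε / (Fintype.card S : ℝ) := by
  classical
  obtain ⟨hc0, hc1⟩ := hc
  set T : ℝ := ∑ u, (g u).im with hT
  have hTpos : 0 < T :=
    Finset.sum_pos (fun i _ => hg i) Finset.univ_nonempty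
  set q : S → ℝ := fun y => (g y).im / T with hqdef
  have hq0 : ∀ y, 0 ≤ q y := fun y => div_nonneg (hg y).le hTpos.le
  have ht : ∀ y, Qquot (g x') (h x') (g y) (h y) * cosAlpha (g x') (h x') (g y) (h y) ≤ 1 :=
    fun y => Qcos_le_one _ _ _ _ (hg x') (hh x') (hg y) (hh y)
  have hqsum : ∑ y, q y = 1 := by
    rw [hqdef]
    simp only
    rw [← Finset.sum_div, ← hT, div_self hTpos.ne']
  set n : ℝ := (Fintype.card S : ℝ) with hn
  have hnpos : 0 < n := by
    rw [hn]; exact_mod_cast Fintype.card_pos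
  -- q y' ≥ ε / n
  have hqy' : ε / n ≤ q y' := by
    have hTle : T ≤ n * ((g y').im / ε) := by
      calc T = ∑ u, (g u).im := hT
        _ ≤ ∑ _u : S, (g y').im / ε := by
            apply Finset.sum_le_sum
            intro i _
            rw [le_div_iff₀ hε]
            linarith [hvis i]
        _ = n * ((g y').im / ε) := by
            rw [Finset.sum_const, nsmul_eq_mul, hn, Finset.card_univ]
    rw [hqdef]
    simp only
    rw [div_le_div_iff₀ hnpos hTpos]
    have := hg y'
    calc ε * T ≤ ε * (n * ((g y').im / ε)) := by
          exact mul_le_mul_of_nonneg_left hTle hε.le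
      _ = (g y').im * n := by field_simp
  have hsplit : ∑ y, q y * (Qquot (g x') (h x') (g y) (h y) *
      cosAlpha (g x') (h x') (g y) (h y)) ≤ 1 - q y' * (1 - c) := by
    have h1 : ∑ y ∈ Finset.univ \ {y'}, q y * (Qquot (g x') (h x') (g y) (h y) *
        cosAlpha (g x') (h x') (g y) (h y)) ≤ ∑ y ∈ Finset.univ \ {y'}, q y := by
      apply Finset.sum_le_sum
      intro i _
      exact mul_le_of_le_one_right (hq0 i) (ht i)
    have h2 : q y' * (Qquot (g x') (h x') (g y') (h y') *
        cosAlpha (g x') (h x') (g y') (h y')) ≤ q y' * c :=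
      mul_le_mul_of_nonneg_left hQcos (hq0 y')
    have e1 := Finset.sum_eq_sum_sdiff_singleton_add (Finset.mem_univ y')
      (fun y => q y * (Qquot (g x') (h x') (g y) (h y) * cosAlpha (g x') (h x') (g y) (h y)))
    have e2 := Finset.sum_eq_sum_sdiff_singleton_add (Finset.mem_univ y') q
    rw [e2] at hqsum
    rw [e1]
    linarith
  calc ∑ y, ((g y).im / ∑ u, (g u).im) * Qquot (g x') (h x') (g y) (h y) *
        cosAlpha (g x') (h x') (g y) (h y)
      = ∑ y, q y * (Qquot (g x') (h x') (g y) (h y) * cosAlpha (g x') (h x') (g y) (h y)) := by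
        apply Finset.sum_congr rfl
        intro i _
        rw [mul_assoc]
    _ ≤ 1 - q y' * (1 - c) := hsplit
    _ ≤ 1 - (1 - c) * ε / n := by
        have h1c : 0 ≤ 1 - c := by linarith
        have : (1 - c) * (ε / n) ≤ (1 - c) * q y' := mul_le_mul_of_nonneg_left hqy' h1c
        rw [mul_div_assoc]
        linarith
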